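/- Given η > 0 and h₁, h₂ ∈ ℕ, there exist integers q₁ and q₂ such that the following holds. If A is an η-dense reduced hypergraph with index set [q₁ + q₂], vertex classes P^{ij} and constituents A^{ijk}, then there are indices λ(1) < ⋯ < λ(h₁) in [q₁] and σ(1) < ⋯ < σ(h₂) in [q₁+1, q₁+q₂] satisfying: (i) for each pair 1 ≤ r < s ≤ h₁ there is a vertex P^{λ(r)λ(s)}_red ∈ P^{λ(r)λ(s)}; (ii) for all 1 ≤ r ≤ h₁ and 1 ≤ t ≤ h₂ there are two vertices P^{λ(r)σ(t)}_blue, P^{λ(r)σ(t)}_green ∈ P^{λ(r)σ(t)}; (iii) for every 1 ≤ r < s ≤ h₁ and 1 ≤ t ≤ h₂, the three vertices P^{λ(r)λ(s)}_red, P^{λ(r)σ(t)}_blue and P^{λ(s)σ(t)}_green form a hyperedge of A^{λ(r)λ(s)σ(t)}. -/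

import Mathlib

/-- A reduced hypergraph with index set `{0, 1, …, q−1}`: pairwise disjoint
nonempty vertex classes `P i j` (for distinct indices `i ≠ j`, with `P i j = P j i`)
and, for each triple `i < j < l`, a 3-partite 3-graph (constituent) whose edges
are triples with one vertex in each of `P i j`, `P i l`, `P j l`. -/
structure ReducedHG (q : ℕ) where
  P : ℕ → ℕ → Finset ℕ
  A : ℕ → ℕ → ℕ → Finset (ℕ × ℕ × ℕ)
  P_symm : ∀ i j, P i j = P j i
  P_nonempty : ∀ i j, i < q → j < q → i ≠ j → (P i j).Nonempty
  P_disjoint : ∀ i j i' j', i < j → j < q → i' < j' → j' < q →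
    (i, j) ≠ (i', j') → Disjoint (P i j) (P i' j')
  A_sub : ∀ i j l, i < j → j < l → l < q →
    ∀ e ∈ A i j l, e.1 ∈ P i j ∧ e.2.1 ∈ P i l ∧ e.2.2 ∈ P j l

/-- A reduced hypergraph is `η`-dense if each constituent has at least an
`η`-fraction of all possible edges. -/
def ReducedHG.Dense {q : ℕ} (R : ReducedHG q) (η : ℝ) : Prop :=
  ∀ i j l, i < j → j < l → l < q →
    η * ((R.P i j).card : ℝ) * ((R.P i l).card : ℝ) * ((R.P j l).card : ℝ) ≤
      ((R.A i j l).card : ℝ)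


open Finset
open scoped Classical

namespace RHG
set_option maxHeartbeats 1000000



/-- Markov-type bound: if every weight is at most `cap`, then the total is at most
(number of heavy elements) * cap + (number of elements) * θ. -/
lemma markov_filter {α : Type*} (X : Finset α) (wt : α → ℝ) (cap θ : ℝ)
    (hcap : ∀ x ∈ X, wt x ≤ cap) (hθ : 0 ≤ θ) :
    ∑ x ∈ X, wt x ≤ ((X.filter (fun x => θ ≤ wt x)).card : ℝ) * cap + (X.card : ℝ) * θ := by
  classical
  rw [← Finset.sum_filter_add_sum_filter_not X (fun x => θ ≤ wt x)]
  have h1 : ∑ x ∈ X.filter (fun x => θ ≤ wt x), wt x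
      ≤ ((X.filter (fun x => θ ≤ wt x)).card : ℝ) * cap := by
    rw [mul_comm]
    calc ∑ x ∈ X.filter (fun x => θ ≤ wt x), wt x
        ≤ ∑ _x ∈ X.filter (fun x => θ ≤ wt x), cap :=
          Finset.sum_le_sum (fun x hx => hcap x (Finset.mem_filter.mp hx).1)
      _ = cap * (X.filter (fun x => θ ≤ wt x)).card := by
          rw [Finset.sum_const, nsmul_eq_mul, mul_comm]
  have h2 : ∑ x ∈ X.filter (fun x => ¬ θ ≤ wt x), wt x ≤ (X.card : ℝ) * θ := by
    have hsub : ((X.filter (fun x => ¬ θ ≤ wt x)).card : ℝ) ≤ (X.card : ℝ) := by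
      exact_mod_cast Finset.card_le_card (Finset.filter_subset _ _)
    calc ∑ x ∈ X.filter (fun x => ¬ θ ≤ wt x), wt x
        ≤ ∑ _x ∈ X.filter (fun x => ¬ θ ≤ wt x), θ :=
          Finset.sum_le_sum (fun x hx => le_of_not_ge (Finset.mem_filter.mp hx).2)
      _ = ((X.filter (fun x => ¬ θ ≤ wt x)).card : ℝ) * θ := by
          rw [Finset.sum_const, nsmul_eq_mul]
      _ ≤ (X.card : ℝ) * θ := mul_le_mul_of_nonneg_right hsub hθ
  linarith

/-- Averaging: some element has weight at least the average lower bound. -/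
lemma exists_heavy {α : Type*} (X : Finset α) (hX : X.Nonempty) (wt : α → ℝ) (θ : ℝ)
    (h : (X.card : ℝ) * θ ≤ ∑ x ∈ X, wt x) : ∃ x ∈ X, θ ≤ wt x := by
  classical
  by_contra hcon
  push_neg at hcon
  have : ∑ x ∈ X, wt x < ∑ _x ∈ X, θ := by
    apply Finset.sum_lt_sum_of_nonempty hX
    intro i hi; exact hcon i hi
  rw [Finset.sum_const, nsmul_eq_mul] at this
  linarith

/-- Cast of card of a filter as a sum of indicators. -/
lemma card_filter_real {α : Type*} (V : Finset α) (Q : α → Prop) [DecidablePred Q] :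
    ((V.filter (fun y => Q y)).card : ℝ) = ∑ y ∈ V, (if Q y then (1:ℝ) else 0) := by
  rw [Finset.card_filter]
  push_cast
  rfl

/-- Double counting incidences. -/
lemma double_count {α β : Type*} (X : Finset α) (Y : Finset β) (Pred : α → β → Prop)
    [∀ x, DecidablePred (Pred x)] [∀ y, DecidablePred (fun x => Pred x y)] :
    ∑ x ∈ X, ((Y.filter (fun y => Pred x y)).card : ℝ)
      = ∑ y ∈ Y, ((X.filter (fun x => Pred x y)).card : ℝ) := by
  classical
  calc ∑ x ∈ X, ((Y.filter (fun y => Pred x y)).card : ℝ)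
      = ∑ x ∈ X, ∑ y ∈ Y, (if Pred x y then (1:ℝ) else 0) := by
        exact Finset.sum_congr rfl (fun x _ => card_filter_real Y (Pred x))
    _ = ∑ y ∈ Y, ∑ x ∈ X, (if Pred x y then (1:ℝ) else 0) := Finset.sum_comm
    _ = ∑ y ∈ Y, ((X.filter (fun x => Pred x y)).card : ℝ) := by
        apply Finset.sum_congr rfl
        intro y _
        rw [card_filter_real X (fun x => Pred x y)]




lemma strictMono_cons {m : ℕ} (a : ℕ) (f : Fin m → ℕ) (hf : StrictMono f)
    (ha : ∀ u, a < f u) : StrictMono (Fin.cons a f : Fin (m+1) → ℕ) := by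
  intro u w huw
  rcases Fin.eq_zero_or_eq_succ w with hw | ⟨w', rfl⟩
  · subst hw
    exact absurd huw (by simp)
  rcases Fin.eq_zero_or_eq_succ u with hu | ⟨u', rfl⟩
  · subst hu
    simpa using ha w'
  · simp only [Fin.cons_succ]
    exact hf (by exact_mod_cast Fin.succ_lt_succ_iff.mp huw)

/-- Chain lemma for multicolour Ramsey: a long "pre-monochromatic" pivot sequence. -/
lemma ramsey_chain (C : Type*) [Fintype C] [Nonempty C] (L : ℕ) :
    ∃ n : ℕ, ∀ (c : ℕ → ℕ → C) (S : Finset ℕ), n ≤ S.card →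
      ∃ (v : Fin L → ℕ) (cl : Fin L → C), StrictMono v ∧ (∀ u, v u ∈ S) ∧
        ∀ u w : Fin L, u < w → c (v u) (v w) = cl u := by
  induction L with
  | zero =>
      refine ⟨0, fun c S _ => ⟨Fin.elim0, Fin.elim0, ?_, fun u => u.elim0, fun u => u.elim0⟩⟩
      intro a; exact a.elim0
  | succ L ih =>
      obtain ⟨n, hn⟩ := ih
      refine ⟨Fintype.card C * n + 2, fun c S hS => ?_⟩
      have hne : S.Nonempty := by
        rw [← Finset.card_pos]; omega
      set v₀ := S.min' hne with hv₀
      have hv₀S : v₀ ∈ S := S.min'_mem hne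
      set S' := S.erase v₀ with hS'
      have hS'card : Fintype.card C * n < S'.card := by
        have : S'.card = S.card - 1 := by
          rw [hS', Finset.card_erase_of_mem hv₀S]
        omega
      obtain ⟨col, _, hcol⟩ := Finset.exists_lt_card_fiber_of_mul_lt_card_of_maps_to
        (f := fun x => c v₀ x) (t := (Finset.univ : Finset C))
        (fun a _ => Finset.mem_univ _) hS'card
      obtain ⟨v', cl', hmono', hmem', hedge'⟩ := hn c _ (le_of_lt hcol)
      have hmemS' : ∀ u, v' u ∈ S' := by
        intro u
        have := hmem' u
        exact (Finset.mem_filter.mp this).1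
      have hlt : ∀ u, v₀ < v' u := by
        intro u
        have h1 := hmemS' u
        rw [hS', Finset.mem_erase] at h1
        exact lt_of_le_of_ne (S.min'_le _ h1.2) (Ne.symm h1.1)
      refine ⟨Fin.cons v₀ v', Fin.cons col cl', strictMono_cons v₀ v' hmono' hlt, ?_, ?_⟩
      · intro u
        rcases Fin.eq_zero_or_eq_succ u with hu | ⟨u', rfl⟩
        · subst hu; simpa using hv₀S
        · simp only [Fin.cons_succ]
          exact Finset.mem_of_mem_erase (hmemS' u')
      · intro u w huw
        rcases Fin.eq_zero_or_eq_succ w with hw | ⟨w', rfl⟩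
        · subst hw; exact absurd huw (by simp)
        rcases Fin.eq_zero_or_eq_succ u with hu | ⟨u', rfl⟩
        · subst hu
          simp only [Fin.cons_succ, Fin.cons_zero]
          have := hmem' w'
          exact (Finset.mem_filter.mp this).2
        · simp only [Fin.cons_succ]
          exact hedge' u' w' (by exact_mod_cast Fin.succ_lt_succ_iff.mp huw)

/-- Multicolour Ramsey theorem for pairs, on subsets of ℕ. -/
theorem ramsey_pairs (C : Type*) [Fintype C] [Nonempty C] (M : ℕ) :
    ∃ n : ℕ, ∀ (c : ℕ → ℕ → C) (S : Finset ℕ), n ≤ S.card →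
      ∃ (T : Finset ℕ) (col : C), T ⊆ S ∧ M ≤ T.card ∧
        ∀ i ∈ T, ∀ j ∈ T, i < j → c i j = col := by
  obtain ⟨n, hch⟩ := ramsey_chain C (Fintype.card C * M + 1)
  refine ⟨n, fun c S hS => ?_⟩
  obtain ⟨v, cl, hmono, hmem, hedge⟩ := hch c S hS
  have hpig : Fintype.card C * (M - 1) < (Finset.univ : Finset (Fin (Fintype.card C * M + 1))).card := by
    rw [Finset.card_univ, Fintype.card_fin]
    calc Fintype.card C * (M - 1) ≤ Fintype.card C * M :=
          Nat.mul_le_mul_left _ (Nat.sub_le _ _)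
      _ < Fintype.card C * M + 1 := Nat.lt_succ_self _
  obtain ⟨col, _, hcol⟩ := Finset.exists_lt_card_fiber_of_mul_lt_card_of_maps_to
    (f := fun u => cl u) (t := (Finset.univ : Finset C)) (fun a _ => Finset.mem_univ _) hpig
  set F := (Finset.univ.filter fun u : Fin (Fintype.card C * M + 1) => cl u = col) with hF
  refine ⟨F.image v, col, ?_, ?_, ?_⟩
  · intro x hx
    obtain ⟨u, _, rfl⟩ := Finset.mem_image.mp hx
    exact hmem u
  · rw [Finset.card_image_of_injective _ hmono.injective]
    omega
  · intro i hi j hj hij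
    obtain ⟨u, hu, rfl⟩ := Finset.mem_image.mp hi
    obtain ⟨w, hw, rfl⟩ := Finset.mem_image.mp hj
    have huw : u < w := hmono.lt_iff_lt.mp hij
    rw [hedge u w huw]
    exact (Finset.mem_filter.mp hu).2




/-- A system of bipartite graphs between vertex classes: for `i < j` in `S`,
`H i j ⊆ Q i ×ˢ G j` has at least a `β`-fraction of all pairs. -/
def Sys (Q G : ℕ → Finset ℕ) (H : ℕ → ℕ → Finset (ℕ × ℕ)) (S : Finset ℕ) (β : ℝ) : Prop :=
  (∀ i ∈ S, (Q i).Nonempty) ∧ (∀ i ∈ S, (G i).Nonempty) ∧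
  (∀ i ∈ S, ∀ j ∈ S, i < j →
    H i j ⊆ (Q i) ×ˢ (G j) ∧ β * ((Q i).card : ℝ) * ((G j).card : ℝ) ≤ ((H i j).card : ℝ))

/-- A staircase of length `m`: indices `f 0 < f 1 < ⋯` in `S` together with vertices
`b (f u) ∈ Q (f u)`, `g (f u) ∈ G (f u)` such that `(b (f u), g (f v)) ∈ H (f u) (f v)`
whenever `u < v`. -/
def Stair (Q G : ℕ → Finset ℕ) (H : ℕ → ℕ → Finset (ℕ × ℕ)) (S : Finset ℕ) (m : ℕ) : Prop :=
  ∃ f : Fin m → ℕ, StrictMono f ∧ (∀ u, f u ∈ S) ∧ ∃ b g : ℕ → ℕ,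
    (∀ u, b (f u) ∈ Q (f u)) ∧ (∀ u, g (f u) ∈ G (f u)) ∧
    ∀ u v : Fin m, u < v → (b (f u), g (f v)) ∈ H (f u) (f v)

lemma stair_anti {Q G G' : ℕ → Finset ℕ} {H H' : ℕ → ℕ → Finset (ℕ × ℕ)}
    {S S' : Finset ℕ} {m : ℕ} (hS : S' ⊆ S) (hG : ∀ k ∈ S', G' k ⊆ G k)
    (hH : ∀ i ∈ S', ∀ j ∈ S', i < j → H' i j ⊆ H i j) :
    Stair Q G' H' S' m → Stair Q G H S m := by
  rintro ⟨f, hmono, hmem, b, g, hb, hg, he⟩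
  exact ⟨f, hmono, fun u => hS (hmem u), b, g, hb,
    fun u => hG _ (hmem u) (hg u),
    fun u v huv => hH _ (hmem u) _ (hmem v) (hmono huv) (he u v huv)⟩

lemma deg_le {G : Finset ℕ} {H : Finset (ℕ × ℕ)} (b : ℕ) :
    (((G.filter (fun g => (b, g) ∈ H)).card : ℝ)) ≤ (G.card : ℝ) := by
  exact_mod_cast Finset.card_le_card (Finset.filter_subset _ _)

lemma sum_deg {Q G : Finset ℕ} {H : Finset (ℕ × ℕ)} (hsub : H ⊆ Q ×ˢ G) :
    ((H.card : ℝ)) = ∑ b ∈ Q, (((G.filter (fun g => (b, g) ∈ H)).card : ℝ)) := by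
  have h1 : H.card = ∑ b ∈ Q, ((H.filter (fun e => e.1 = b)).card) := by
    apply Finset.card_eq_sum_card_fiberwise
    intro e he
    exact (Finset.mem_product.mp (hsub he)).1
  have h2 : ∀ b : ℕ, (H.filter (fun e => e.1 = b)).card
      = (G.filter (fun g => (b, g) ∈ H)).card := by
    intro b
    apply Finset.card_bij (fun e _ => e.2)
    · intro e he
      rw [Finset.mem_filter] at he ⊢
      refine ⟨(Finset.mem_product.mp (hsub he.1)).2, ?_⟩
      have : e = (b, e.2) := by
        rw [← he.2]
      rw [← this]; exact he.1
    · intro e₁ h₁ e₂ h₂ hee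
      rw [Finset.mem_filter] at h₁ h₂
      exact Prod.ext (h₁.2.trans h₂.2.symm) hee
    · intro g hg
      rw [Finset.mem_filter] at hg
      exact ⟨(b, g), Finset.mem_filter.mpr ⟨hg.2, rfl⟩, rfl⟩
  rw [h1]
  push_cast
  exact Finset.sum_congr rfl (fun b _ => by rw [h2 b])

/-- In a `β`-dense bipartite graph, at least a `β/2`-fraction of left vertices have
degree at least `β/2` of the right class. -/
lemma dense_many_heavy {Q G : Finset ℕ} {H : Finset (ℕ × ℕ)} {β : ℝ} (hβ : 0 < β)
    (hsub : H ⊆ Q ×ˢ G) (hG : G.Nonempty)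
    (hden : β * (Q.card : ℝ) * (G.card : ℝ) ≤ (H.card : ℝ)) :
    (β / 2) * (Q.card : ℝ) ≤
      ((Q.filter (fun b => (β / 2) * ((G.card : ℝ)) ≤
        ((G.filter (fun g => (b, g) ∈ H)).card : ℝ))).card : ℝ) := by
  have hGpos : (0 : ℝ) < (G.card : ℝ) := by exact_mod_cast Finset.card_pos.mpr hG
  have hm := markov_filter Q
    (fun b => ((G.filter (fun g => (b, g) ∈ H)).card : ℝ)) (G.card : ℝ)
    ((β / 2) * (G.card : ℝ)) (fun b _ => deg_le b) (by positivity)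
  rw [← sum_deg hsub] at hm
  set F := ((Q.filter (fun b => (β / 2) * ((G.card : ℝ)) ≤
        ((G.filter (fun g => (b, g) ∈ H)).card : ℝ))).card : ℝ) with hF
  have h1 : (β / 2) * (Q.card : ℝ) * (G.card : ℝ) ≤ F * (G.card : ℝ) := by nlinarith
  have := (mul_le_mul_iff_of_pos_right hGpos).mp h1
  linarith

/-- The staircase lemma: every sufficiently large `β`-dense system contains an
`m`-staircase. -/
theorem bstair (m : ℕ) : ∀ β : ℝ, 0 < β → ∃ n : ℕ,
    ∀ Q G H S, n ≤ S.card → Sys Q G H S β → Stair Q G H S m := by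
  induction m with
  | zero =>
      intro β _
      exact ⟨0, fun Q G H S _ _ => ⟨Fin.elim0, fun a => a.elim0, fun u => u.elim0,
        (fun _ => 0), (fun _ => 0), fun u => u.elim0, fun u => u.elim0, fun u _ _ => u.elim0⟩⟩
  | succ m ih =>
      suffices aux : ∀ F : ℕ, ∀ β : ℝ, 0 < β → 8 / β ^ 2 ≤ (F : ℝ) → ∃ n : ℕ,
          ∀ Q G H S, n ≤ S.card → Sys Q G H S β → Stair Q G H S (m + 1) by
        intro β hβ
        obtain ⟨F, hF⟩ := exists_nat_ge (8 / β ^ 2)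
        exact aux F β hβ hF
      intro F
      induction F with
      | zero =>
          intro β hβ h8
          exfalso
          have : (0:ℝ) < 8 / β ^ 2 := by positivity
          simp only [Nat.cast_zero] at h8
          linarith
      | succ F ihF =>
          intro β hβ h8
          by_cases hβ1 : 1 < β
          · -- density exceeding 1 is impossible
            refine ⟨2, fun Q G H S hS hsys => ?_⟩
            exfalso
            obtain ⟨hQne, hGne, hQG⟩ := hsys
            obtain ⟨i, hi, j, hj, hij⟩ : ∃ i ∈ S, ∃ j ∈ S, i < j := by
              obtain ⟨a, ha, b, hb, hab⟩ := Finset.one_lt_card.mp (by omega : 1 < S.card)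
              rcases lt_or_gt_of_ne hab with h | h
              · exact ⟨a, ha, b, hb, h⟩
              · exact ⟨b, hb, a, ha, h⟩
            obtain ⟨hsub, hden⟩ := hQG i hi j hj hij
            have hle : ((H i j).card : ℝ) ≤ ((Q i).card : ℝ) * ((G j).card : ℝ) := by
              have h1 := Finset.card_le_card hsub
              have h2 : (Q i ×ˢ G j).card = (Q i).card * (G j).card := Finset.card_product _ _
              exact_mod_cast h1.trans_eq h2
            have hQ1 : (1:ℝ) ≤ ((Q i).card : ℝ) := by
              exact_mod_cast Finset.card_pos.mpr (hQne i hi)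
            have hG1 : (1:ℝ) ≤ ((G j).card : ℝ) := by
              exact_mod_cast Finset.card_pos.mpr (hGne j hj)
            have hX1 : (1:ℝ) ≤ ((Q i).card : ℝ) * ((G j).card : ℝ) := by nlinarith
            have hXpos : (0:ℝ) < ((Q i).card : ℝ) * ((G j).card : ℝ) := by linarith
            have h2' : β * (((Q i).card : ℝ) * ((G j).card : ℝ)) ≤
                1 * (((Q i).card : ℝ) * ((G j).card : ℝ)) := by
              calc β * (((Q i).card : ℝ) * ((G j).card : ℝ))
                  = β * ((Q i).card : ℝ) * ((G j).card : ℝ) := by ring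
                _ ≤ ((H i j).card : ℝ) := hden
                _ ≤ ((Q i).card : ℝ) * ((G j).card : ℝ) := hle
                _ = 1 * (((Q i).card : ℝ) * ((G j).card : ℝ)) := by ring
            have := (mul_le_mul_iff_of_pos_right hXpos).mp h2'
            linarith
          push_neg at hβ1
          -- parameters
          set δ : ℝ := β ^ 2 / 8 with hδdef
          have hδpos : 0 < δ := by positivity
          have hδβ : δ < β := by nlinarith
          have h2pos : (0:ℝ) < 1 - β / 2 := by linarith
          set β' : ℝ := (β - δ) / (1 - β / 2) with hβ'def
          have hβ'pos : 0 < β' := div_pos (by linarith) h2pos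
          have hβ'eq : β' * (1 - β / 2) = β - δ := by
            rw [hβ'def]; exact div_mul_cancel₀ _ (ne_of_gt h2pos)
          -- fuel bound
          have h8' : 8 / β' ^ 2 ≤ (F : ℝ) := by
            have key : 8 * (1 - β/2)^2 ≤ (8 - β^2) * (1 - β/8)^2 := by
              nlinarith [sq_nonneg β, sq_nonneg (1 - β), hβ.le, hβ1]
            have hβd : β - δ = β * (1 - β/8) := by rw [hδdef]; ring
            have hβ'sq : β' ^ 2 = (β * (1 - β/8))^2 / (1 - β/2)^2 := by
              rw [hβ'def, hβd, div_pow]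
            have hfrac : 8 / β' ^ 2 ≤ 8 / β ^ 2 - 1 := by
              have hb18 : (0:ℝ) < β * (1 - β/8) := by nlinarith
              have hβ2 : (0:ℝ) < β ^ 2 := by positivity
              have hrw : 8 / β ^ 2 - 1 = (8 - β ^ 2) / β ^ 2 := by field_simp
              rw [hrw, hβ'sq, div_div_eq_mul_div, div_le_div_iff₀ (by positivity) hβ2]
              nlinarith [mul_le_mul_of_nonneg_right key (sq_nonneg β)]
            have hcast : ((F + 1 : ℕ) : ℝ) = (F : ℝ) + 1 := by push_cast; ring
            rw [hcast] at h8
            linarith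
          obtain ⟨n₁, h₁⟩ := ih δ hδpos
          obtain ⟨n₂, h₂⟩ := ihF β' hβ'pos h8'
          set M := max (max n₁ n₂) 1 with hMdef
          obtain ⟨Rn, hR⟩ := ramsey_pairs Bool M
          obtain ⟨k₀, hk₀⟩ := exists_nat_ge (2 * (Rn : ℝ) / β)
          refine ⟨k₀ + 2, fun Q G H S hS hsys => ?_⟩
          obtain ⟨hQne, hGne, hQG⟩ := hsys
          have hSne : S.Nonempty := by rw [← Finset.card_pos]; omega
          set i₀ := S.min' hSne with hi₀def
          have hi₀S : i₀ ∈ S := S.min'_mem hSne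
          set S₀ := S.erase i₀ with hS₀def
          have hS₀sub : S₀ ⊆ S := Finset.erase_subset _ _
          have hi₀lt : ∀ j ∈ S₀, i₀ < j := by
            intro j hj
            rw [hS₀def, Finset.mem_erase] at hj
            exact lt_of_le_of_ne (S.min'_le _ hj.2) (Ne.symm hj.1)
          have hS₀card : k₀ + 1 ≤ S₀.card := by
            rw [hS₀def, Finset.card_erase_of_mem hi₀S]; omega
          -- heavy left-vertices for each j
          set Vst : ℕ → Finset ℕ := fun j => (Q i₀).filter
            (fun b => (β / 2) * (((G j).card : ℝ)) ≤
              (((G j).filter (fun g => (b, g) ∈ H i₀ j)).card : ℝ)) with hVstdef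
          have hVst : ∀ j ∈ S₀, (β / 2) * ((Q i₀).card : ℝ) ≤ ((Vst j).card : ℝ) := by
            intro j hj
            obtain ⟨hsub, hden⟩ := hQG i₀ hi₀S j (hS₀sub hj) (hi₀lt j hj)
            simp only [hVstdef]
            exact dense_many_heavy hβ hsub (hGne j (hS₀sub hj)) hden
          -- one vertex heavy for many j
          have hdc : ∑ b ∈ Q i₀, ((S₀.filter (fun j => b ∈ Vst j)).card : ℝ)
              = ∑ j ∈ S₀, (((Q i₀).filter (fun b => b ∈ Vst j)).card : ℝ) :=
            double_count (Q i₀) S₀ (fun b j => b ∈ Vst j)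
          have hsum : ((Q i₀).card : ℝ) * ((β / 2) * (S₀.card : ℝ)) ≤
              ∑ b ∈ Q i₀, ((S₀.filter (fun j => b ∈ Vst j)).card : ℝ) := by
            have heq : ∀ j ∈ S₀, ((Q i₀).filter (fun b => b ∈ Vst j)) = Vst j := by
              intro j hj
              rw [Finset.filter_mem_eq_inter, Finset.inter_eq_right]
              simp only [hVstdef]
              exact Finset.filter_subset _ _
            calc ((Q i₀).card : ℝ) * ((β / 2) * (S₀.card : ℝ))
                = (S₀.card : ℝ) * ((β/2) * ((Q i₀).card : ℝ)) := by ring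
              _ ≤ ∑ j ∈ S₀, ((Vst j).card : ℝ) := by
                  have hs := Finset.sum_le_sum (fun j hj => hVst j hj)
                  rw [Finset.sum_const, nsmul_eq_mul] at hs
                  exact hs
              _ = ∑ j ∈ S₀, (((Q i₀).filter (fun b => b ∈ Vst j)).card : ℝ) := by
                  exact Finset.sum_congr rfl (fun j hj => by rw [heq j hj])
              _ = ∑ b ∈ Q i₀, ((S₀.filter (fun j => b ∈ Vst j)).card : ℝ) := hdc.symm
          obtain ⟨bst, hbstQ, hbstT⟩ := exists_heavy (Q i₀) (hQne i₀ hi₀S) _ _ hsum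
          set T := S₀.filter (fun j => bst ∈ Vst j) with hTdef
          have hTR : Rn ≤ T.card := by
            have hβne : β ≠ 0 := ne_of_gt hβ
            have e1 : (β/2) * (2*(Rn:ℝ)/β) = (Rn:ℝ) := by field_simp
            have h1 : (Rn : ℝ) ≤ (β/2) * (S₀.card : ℝ) := by
              rw [← e1]
              apply mul_le_mul_of_nonneg_left _ (by positivity : (0:ℝ) ≤ β/2)
              have : (k₀ : ℝ) + 1 ≤ (S₀.card : ℝ) := by exact_mod_cast hS₀card
              linarith
            have h2 := h1.trans hbstT
            exact_mod_cast h2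
          have hTS₀ : T ⊆ S₀ := Finset.filter_subset _ _
          -- neighbourhood classes of bst
          set Gst : ℕ → Finset ℕ := fun k => (G k).filter (fun g => (bst, g) ∈ H i₀ k) with hGstdef
          have hGstdense : ∀ j ∈ T, (β/2) * ((G j).card : ℝ) ≤ ((Gst j).card : ℝ) := by
            intro j hj
            have hj2 : bst ∈ Vst j := by
              simp only [hTdef, Finset.mem_filter] at hj
              exact hj.2
            simp only [hVstdef, Finset.mem_filter] at hj2
            simpa only [hGstdef] using hj2.2
          have hGstne : ∀ j ∈ T, (Gst j).Nonempty := by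
            intro j hj
            rw [← Finset.card_pos]
            have hG1 : (0:ℝ) < ((G j).card : ℝ) := by
              exact_mod_cast Finset.card_pos.mpr (hGne j (hS₀sub (hTS₀ hj)))
            have h4 : (0:ℝ) < ((Gst j).card : ℝ) :=
              lt_of_lt_of_le (mul_pos (by linarith) hG1) (hGstdense j hj)
            exact_mod_cast h4
          -- colour pairs: alive (dense into Gst) or dead
          set col : ℕ → ℕ → Bool := fun j k =>
            if δ * ((Q j).card : ℝ) * ((Gst k).card : ℝ) ≤
              (((H j k).filter (fun e => e.2 ∈ Gst k)).card : ℝ) then true else false with hcoldef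
          obtain ⟨T', cb, hT'T, hMT', hmc⟩ := hR col T hTR
          have hT'S : T' ⊆ S := fun x hx => hS₀sub (hTS₀ (hT'T hx))
          cases cb with
          | true =>
            -- alive: recurse at length m with classes Gst
            set H' : ℕ → ℕ → Finset (ℕ × ℕ) :=
              fun j k => (H j k).filter (fun e => e.2 ∈ Gst k) with hH'def
            have hsys' : Sys Q Gst H' T' δ := by
              refine ⟨fun i hi => hQne i (hT'S hi), fun i hi => hGstne i (hT'T hi), ?_⟩
              intro a ha c hc hac
              constructor
              · intro e he
                simp only [hH'def] at he
                rw [Finset.mem_filter] at he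
                rw [Finset.mem_product]
                have hsub := (hQG a (hT'S ha) c (hT'S hc) hac).1
                exact ⟨(Finset.mem_product.mp (hsub he.1)).1, he.2⟩
              · have halive := hmc a ha c hc hac
                simp only [hcoldef] at halive
                by_cases hP : δ * ((Q a).card : ℝ) * ((Gst c).card : ℝ) ≤
                    (((H a c).filter (fun e => e.2 ∈ Gst c)).card : ℝ)
                · simpa only [hH'def] using hP
                · rw [if_neg hP] at halive
                  cases halive
            have hstair := h₁ Q Gst H' T'
              (le_trans ((le_max_left n₁ n₂).trans (le_max_left _ 1)) hMT') hsys'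
            obtain ⟨f', hmono', hmem', b', g', hb', hg', he'⟩ := hstair
            have hi₀f : ∀ u, i₀ < f' u := fun u => hi₀lt _ (hTS₀ (hT'T (hmem' u)))
            refine ⟨Fin.cons i₀ f', strictMono_cons i₀ f' hmono' hi₀f, ?_,
              (fun a => if a = i₀ then bst else b' a),
              (fun a => if a = i₀ then (hGne i₀ hi₀S).choose else g' a), ?_, ?_, ?_⟩
            · intro u
              rcases Fin.eq_zero_or_eq_succ u with hu | ⟨u', rfl⟩
              · subst hu; simpa using hi₀S
              · simp only [Fin.cons_succ]; exact hT'S (hmem' u')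
            · intro u
              rcases Fin.eq_zero_or_eq_succ u with hu | ⟨u', rfl⟩
              · subst hu; simp only [Fin.cons_zero, if_pos rfl]; exact hbstQ
              · simp only [Fin.cons_succ, if_neg (hi₀f u').ne']
                exact hb' u'
            · intro u
              rcases Fin.eq_zero_or_eq_succ u with hu | ⟨u', rfl⟩
              · subst hu; simp only [Fin.cons_zero, if_pos rfl]
                exact (hGne i₀ hi₀S).choose_spec
              · simp only [Fin.cons_succ, if_neg (hi₀f u').ne']
                have h5 := hg' u'
                simp only [hGstdef] at h5
                exact (Finset.mem_filter.mp h5).1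
            · intro u v huv
              rcases Fin.eq_zero_or_eq_succ v with hv | ⟨v', rfl⟩
              · subst hv; exact absurd huv (by simp)
              rcases Fin.eq_zero_or_eq_succ u with hu | ⟨u', rfl⟩
              · subst hu
                simp only [Fin.cons_zero, Fin.cons_succ, if_pos rfl, if_neg (hi₀f v').ne']
                have h6 := hg' v'
                simp only [hGstdef] at h6
                exact (Finset.mem_filter.mp h6).2
              · simp only [Fin.cons_succ, if_neg (hi₀f u').ne', if_neg (hi₀f v').ne']
                have h7 := he' u' v' (Fin.succ_lt_succ_iff.mp huv)
                simp only [hH'def] at h7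
                exact (Finset.mem_filter.mp h7).1
          | false =>
            -- dead: density increment
            have hT'ne : T'.Nonempty := by
              rw [← Finset.card_pos]
              have : 1 ≤ M := le_max_right _ _
              omega
            set m₀ := T'.min' hT'ne with hm₀def
            have hm₀T' : m₀ ∈ T' := T'.min'_mem hT'ne
            set G' : ℕ → Finset ℕ := fun k => if k = m₀ then G k else (G k) \ (Gst k) with hG'def
            set H'' : ℕ → ℕ → Finset (ℕ × ℕ) :=
              fun j k => (H j k).filter (fun e => e.2 ∈ G' k) with hH''def
            have hG'sub : ∀ k, G' k ⊆ G k := by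
              intro k
              simp only [hG'def]
              split
              · exact subset_rfl
              · exact Finset.sdiff_subset
            have hmass : ∀ j ∈ T', ∀ k ∈ T', j < k →
                (β - δ) * ((Q j).card : ℝ) * ((G k).card : ℝ) ≤ ((H'' j k).card : ℝ) := by
              intro j hj k hk hjk
              have hkm₀ : k ≠ m₀ := by
                intro h; subst h
                exact absurd hjk (not_lt.mpr (T'.min'_le _ hj))
              have hG'k : G' k = (G k) \ (Gst k) := by simp only [hG'def, if_neg hkm₀]
              obtain ⟨hsub, hden⟩ := hQG j (hT'S hj) k (hT'S hk) hjk
              have hpart : (H j k).card = ((H j k).filter (fun e => e.2 ∈ G' k)).card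
                  + ((H j k).filter (fun e => ¬ (e.2 ∈ G' k))).card :=
                (Finset.card_filter_add_card_filter_not _).symm
              have hsub2 : (H j k).filter (fun e => ¬ (e.2 ∈ G' k))
                  ⊆ (H j k).filter (fun e => e.2 ∈ Gst k) := by
                intro e he
                rw [Finset.mem_filter] at he ⊢
                refine ⟨he.1, ?_⟩
                have he2 : e.2 ∈ G k := (Finset.mem_product.mp (hsub he.1)).2
                by_contra hcon
                exact he.2 (by rw [hG'k, Finset.mem_sdiff]; exact ⟨he2, hcon⟩)
              have hdead := hmc j hj k hk hjk
              have hmassGst : (((H j k).filter (fun e => e.2 ∈ Gst k)).card : ℝ)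
                  < δ * ((Q j).card : ℝ) * ((Gst k).card : ℝ) := by
                simp only [hcoldef] at hdead
                by_cases hP : δ * ((Q j).card : ℝ) * ((Gst k).card : ℝ) ≤
                    (((H j k).filter (fun e => e.2 ∈ Gst k)).card : ℝ)
                · rw [if_pos hP] at hdead
                  cases hdead
                · linarith [not_le.mp hP]
              have hGstle : ((Gst k).card : ℝ) ≤ ((G k).card : ℝ) := by
                have : Gst k ⊆ G k := by simp only [hGstdef]; exact Finset.filter_subset _ _
                exact_mod_cast Finset.card_le_card this
              have hQ0 : (0:ℝ) ≤ ((Q j).card : ℝ) := Nat.cast_nonneg _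
              have hcast : ((H j k).card : ℝ) = ((H'' j k).card : ℝ)
                  + (((H j k).filter (fun e => ¬ (e.2 ∈ G' k))).card : ℝ) := by
                simp only [hH''def]
                exact_mod_cast hpart
              have hsub2c : (((H j k).filter (fun e => ¬ (e.2 ∈ G' k))).card : ℝ)
                  ≤ (((H j k).filter (fun e => e.2 ∈ Gst k)).card : ℝ) := by
                exact_mod_cast Finset.card_le_card hsub2
              nlinarith [mul_le_mul_of_nonneg_left hGstle
                (mul_nonneg hδpos.le hQ0 : (0:ℝ) ≤ δ * ((Q j).card : ℝ))]
            have hsys'' : Sys Q G' H'' T' β' := by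
              refine ⟨fun i hi => hQne i (hT'S hi), ?_, ?_⟩
              · intro k hk
                by_cases hkm₀ : k = m₀
                · subst hkm₀; simp only [hG'def, if_pos rfl]; exact hGne _ (hT'S hk)
                · have hm₀k : m₀ < k := lt_of_le_of_ne (T'.min'_le _ hk) (Ne.symm hkm₀)
                  have h9 := hmass m₀ hm₀T' k hk hm₀k
                  have hQpos : (0:ℝ) < ((Q m₀).card : ℝ) := by
                    exact_mod_cast Finset.card_pos.mpr (hQne _ (hT'S hm₀T'))
                  have hGpos : (0:ℝ) < ((G k).card : ℝ) := by
                    exact_mod_cast Finset.card_pos.mpr (hGne _ (hT'S hk))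
                  have hH''pos : (0:ℝ) < ((H'' m₀ k).card : ℝ) := by
                    nlinarith [mul_pos (mul_pos (sub_pos.mpr hδβ) hQpos) hGpos]
                  have h10 : (H'' m₀ k).Nonempty := by
                    rw [← Finset.card_pos]; exact_mod_cast hH''pos
                  obtain ⟨e, he⟩ := h10
                  simp only [hH''def] at he
                  exact ⟨e.2, (Finset.mem_filter.mp he).2⟩
              · intro a ha c hc hac
                have hcm₀ : c ≠ m₀ := by
                  intro h; subst h
                  exact absurd hac (not_lt.mpr (T'.min'_le _ ha))
                have hG'c : G' c = (G c) \ (Gst c) := by simp only [hG'def, if_neg hcm₀]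
                constructor
                · intro e he
                  simp only [hH''def] at he
                  rw [Finset.mem_filter] at he
                  rw [Finset.mem_product]
                  have hsub := (hQG a (hT'S ha) c (hT'S hc) hac).1
                  exact ⟨(Finset.mem_product.mp (hsub he.1)).1, he.2⟩
                · have h11 := hmass a ha c hc hac
                  have hGstc : (β/2) * ((G c).card : ℝ) ≤ ((Gst c).card : ℝ) :=
                    hGstdense c (hT'T hc)
                  have hGstsub : Gst c ⊆ G c := by
                    simp only [hGstdef]; exact Finset.filter_subset _ _
                  have hG'card : ((G' c).card : ℝ) = ((G c).card : ℝ) - ((Gst c).card : ℝ) := by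
                    rw [hG'c, Finset.card_sdiff_of_subset hGstsub,
                      Nat.cast_sub (Finset.card_le_card hGstsub)]
                  have hG'le : ((G' c).card : ℝ) ≤ (1 - β/2) * ((G c).card : ℝ) := by
                    rw [hG'card]; linarith
                  calc β' * ((Q a).card : ℝ) * ((G' c).card : ℝ)
                      ≤ β' * ((Q a).card : ℝ) * ((1 - β/2) * ((G c).card : ℝ)) := by
                        exact mul_le_mul_of_nonneg_left hG'le (mul_nonneg hβ'pos.le (Nat.cast_nonneg _))
                    _ = (β' * (1 - β/2)) * ((Q a).card : ℝ) * ((G c).card : ℝ) := by ring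
                    _ = (β - δ) * ((Q a).card : ℝ) * ((G c).card : ℝ) := by rw [hβ'eq]
                    _ ≤ ((H'' a c).card : ℝ) := h11
            have hstair := h₂ Q G' H'' T'
              (le_trans ((le_max_right n₁ n₂).trans (le_max_left _ 1)) hMT') hsys''
            exact stair_anti hT'S (fun k _ => hG'sub k)
              (fun a _ c _ _ => by simp only [hH''def]; exact Finset.filter_subset _ _) hstair
/-- Fibers of a triple-system are at most the product of the two other classes. -/
lemma fiber_le_prod {A : Finset (ℕ × ℕ × ℕ)} {P2 P3 : Finset ℕ}
    (h : ∀ e ∈ A, e.2.1 ∈ P2 ∧ e.2.2 ∈ P3) (x : ℕ) :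
    (((A.filter (fun e => e.1 = x)).card : ℝ)) ≤ (P2.card : ℝ) * (P3.card : ℝ) := by
  have h1 : (A.filter (fun e => e.1 = x)).card ≤ (P2 ×ˢ P3).card := by
    apply Finset.card_le_card_of_injOn (fun e => (e.2.1, e.2.2))
    · intro e he
      rw [Finset.mem_coe, Finset.mem_filter] at he
      rw [Finset.mem_coe, Finset.mem_product]
      exact h e he.1
    · intro e₁ h₁ e₂ h₂ hee
      rw [Finset.mem_coe, Finset.mem_filter] at h₁ h₂
      have hfst : e₁.2.1 = e₂.2.1 := congrArg Prod.fst hee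
      have hsnd : e₁.2.2 = e₂.2.2 := congrArg Prod.snd hee
      exact Prod.ext (h₁.2.trans h₂.2.symm) (Prod.ext hfst hsnd)
  calc (((A.filter (fun e => e.1 = x)).card : ℝ)) ≤ ((P2 ×ˢ P3).card : ℝ) := by
        exact_mod_cast h1
    _ = (P2.card : ℝ) * (P3.card : ℝ) := by rw [Finset.card_product]; push_cast; rfl

/-- The projection of a fiber to the last two coordinates preserves cardinality. -/
lemma fiber_image_card (A : Finset (ℕ × ℕ × ℕ)) (x : ℕ) :
    (((A.filter (fun e => e.1 = x)).image (fun e => (e.2.1, e.2.2))).card)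
      = ((A.filter (fun e => e.1 = x)).card) := by
  apply Finset.card_image_of_injOn
  intro e₁ h₁ e₂ h₂ hee
  rw [Finset.mem_coe, Finset.mem_filter] at h₁ h₂
  have hfst : e₁.2.1 = e₂.2.1 := congrArg Prod.fst hee
  have hsnd : e₁.2.2 = e₂.2.2 := congrArg Prod.snd hee
  exact Prod.ext (h₁.2.trans h₂.2.symm) (Prod.ext hfst hsnd)

end RHG

set_option maxHeartbeats 1600000

/-- Given `η > 0` and `h₁, h₂`, there are `q₁, q₂` such that
every `η`-dense reduced hypergraph with index set `[q₁ + q₂]` contains indices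
`λ(1) < ⋯ < λ(h₁)` in `[q₁]` and `σ(1) < ⋯ < σ(h₂)` in `[q₁+1, q₁+q₂]` together
with vertices `P^{λ(r)λ(s)}_red`, `P^{λ(r)σ(t)}_blue`, `P^{λ(r)σ(t)}_green` such
that for all `r < s ≤ h₁` and `t ≤ h₂`, the vertices `P^{λ(r)λ(s)}_red`,
`P^{λ(r)σ(t)}_blue`, `P^{λ(s)σ(t)}_green` form an edge of `A^{λ(r)λ(s)σ(t)}`. -/
theorem reduced_hypergraph_bipartite_embedding (η : ℝ) (hη : 0 < η)
    (h₁ h₂ : ℕ) :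
    ∃ q₁ q₂ : ℕ, ∀ R : ReducedHG (q₁ + q₂), R.Dense η →
      ∃ lam : Fin h₁ → ℕ, ∃ sig : Fin h₂ → ℕ,
        StrictMono lam ∧ (∀ r, lam r < q₁) ∧
        StrictMono sig ∧ (∀ t, q₁ ≤ sig t ∧ sig t < q₁ + q₂) ∧
        ∃ Pr Pb Pg : ℕ → ℕ → ℕ,
          (∀ r s : Fin h₁, r < s →
            Pr (lam r) (lam s) ∈ R.P (lam r) (lam s)) ∧
          (∀ (r : Fin h₁) (t : Fin h₂),
            Pb (lam r) (sig t) ∈ R.P (lam r) (sig t) ∧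
            Pg (lam r) (sig t) ∈ R.P (lam r) (sig t)) ∧
          ∀ (r s : Fin h₁) (t : Fin h₂), r < s →
            (Pr (lam r) (lam s), Pb (lam r) (sig t), Pg (lam s) (sig t)) ∈
              R.A (lam r) (lam s) (sig t) := by
  classical
  have hηs : 0 < η / 2 := by linarith
  obtain ⟨nB, hB⟩ := RHG.bstair h₁ (η / 2) hηs
  set nB' := max (max nB h₁) 2 with hnB'def
  set C₀ := 2 ^ nB' with hC₀def
  obtain ⟨q₂', hq₂'⟩ := exists_nat_ge (((C₀ : ℝ) * h₂ + 1) * (2 / η))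
  set q₂ := q₂' + 1 with hq₂def
  have hq₂big : ((C₀ : ℝ) * h₂ + 1) ≤ (η / 2) * q₂ := by
    have h1 : ((C₀ : ℝ) * h₂ + 1) * (2 / η) ≤ (q₂ : ℝ) := by
      have h0 : (q₂' : ℝ) ≤ (q₂ : ℝ) := by exact_mod_cast Nat.le_succ q₂'
      linarith
    have h2 := mul_le_mul_of_nonneg_left h1 (le_of_lt hηs)
    calc ((C₀ : ℝ) * h₂ + 1) = (η/2) * (((C₀ : ℝ) * h₂ + 1) * (2/η)) := by
          field_simp
      _ ≤ (η/2) * (q₂ : ℝ) := h2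
  obtain ⟨q₁, hq₁⟩ := RHG.ramsey_pairs (Finset (Fin q₂)) nB'
  refine ⟨q₁, q₂, fun R hDense => ?_⟩
  -- Step A: for each pair a < b < q₁ there is a red vertex x whose link in
  -- A^{abk} is (η/2)-dense for at least (η/2)q₂ many k in the second block.
  have redA : ∀ a b : ℕ, a < b → b < q₁ → ∃ x, x ∈ R.P a b ∧
      (η / 2) * (q₂ : ℝ) ≤
        (((Finset.Ico q₁ (q₁ + q₂)).filter (fun k =>
          (η / 2) * (((R.P a k).card : ℝ) * ((R.P b k).card : ℝ)) ≤
            (((R.A a b k).filter (fun e => e.1 = x)).card : ℝ))).card : ℝ) := by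
    intro a b hab hb
    have haq : a < q₁ + q₂ := by omega
    have hbq : b < q₁ + q₂ := by omega
    have hPab : (R.P a b).Nonempty := R.P_nonempty a b haq hbq (Nat.ne_of_lt hab)
    have hpabpos : (0:ℝ) < ((R.P a b).card : ℝ) := by
      exact_mod_cast Finset.card_pos.mpr hPab
    have hHvy : ∀ k ∈ Finset.Ico q₁ (q₁ + q₂),
        (η / 2) * ((R.P a b).card : ℝ) ≤
          (((R.P a b).filter (fun x =>
            (η / 2) * (((R.P a k).card : ℝ) * ((R.P b k).card : ℝ)) ≤
              (((R.A a b k).filter (fun e => e.1 = x)).card : ℝ))).card : ℝ) := by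
      intro k hk
      rw [Finset.mem_Ico] at hk
      have hbk : b < k := by omega
      have hkq : k < q₁ + q₂ := hk.2
      have hsubA := R.A_sub a b k hab hbk hkq
      have hPak : (R.P a k).Nonempty := R.P_nonempty a k haq hkq (by omega)
      have hPbk : (R.P b k).Nonempty := R.P_nonempty b k hbq hkq (by omega)
      have hcappos : (0:ℝ) < ((R.P a k).card : ℝ) * ((R.P b k).card : ℝ) := by
        have h1 : (0:ℝ) < ((R.P a k).card : ℝ) := by
          exact_mod_cast Finset.card_pos.mpr hPak
        have h2 : (0:ℝ) < ((R.P b k).card : ℝ) := by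
          exact_mod_cast Finset.card_pos.mpr hPbk
        exact mul_pos h1 h2
      have hm := RHG.markov_filter (R.P a b)
        (fun x => (((R.A a b k).filter (fun e => e.1 = x)).card : ℝ))
        (((R.P a k).card : ℝ) * ((R.P b k).card : ℝ))
        ((η / 2) * (((R.P a k).card : ℝ) * ((R.P b k).card : ℝ)))
        (fun x _ => RHG.fiber_le_prod (fun e he => ⟨(hsubA e he).2.1, (hsubA e he).2.2⟩) x)
        (by positivity)
      have hsum : ((R.A a b k).card : ℝ)
          = ∑ x ∈ R.P a b, (((R.A a b k).filter (fun e => e.1 = x)).card : ℝ) := by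
        have h1 : (R.A a b k).card
            = ∑ x ∈ R.P a b, ((R.A a b k).filter (fun e => e.1 = x)).card := by
          apply Finset.card_eq_sum_card_fiberwise
          intro e he
          exact (hsubA e he).1
        rw [h1]; push_cast; rfl
      set cap := ((R.P a k).card : ℝ) * ((R.P b k).card : ℝ) with hcapdef
      set pab := ((R.P a b).card : ℝ) with hpabdef
      set Fc := (((R.P a b).filter (fun x =>
            (η / 2) * (((R.P a k).card : ℝ) * ((R.P b k).card : ℝ)) ≤
              (((R.A a b k).filter (fun e => e.1 = x)).card : ℝ))).card : ℝ) with hFcdef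
      have hm' : ((R.A a b k).card : ℝ) ≤ Fc * cap + η/2 * pab * cap := by
        calc ((R.A a b k).card : ℝ)
            = ∑ x ∈ R.P a b, (((R.A a b k).filter (fun e => e.1 = x)).card : ℝ) := hsum
          _ ≤ Fc * cap + pab * ((η/2) * cap) := hm
          _ = Fc * cap + η/2 * pab * cap := by ring
      have hA' : η * pab * cap ≤ ((R.A a b k).card : ℝ) := by
        calc η * pab * cap = η * pab * ((R.P a k).card : ℝ) * ((R.P b k).card : ℝ) := by
              rw [hcapdef]; ring
          _ ≤ ((R.A a b k).card : ℝ) := hDense a b k hab hbk hkq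
      have e4 : η * pab * cap = η/2 * pab * cap + η/2 * pab * cap := by ring
      have h6 : (η/2 * pab) * cap ≤ Fc * cap := by
        have : η/2 * pab * cap ≤ Fc * cap := by linarith
        calc (η/2 * pab) * cap = η/2 * pab * cap := by ring
          _ ≤ Fc * cap := this
      have h7 := (mul_le_mul_iff_of_pos_right hcappos).mp h6
      calc (η / 2) * pab = η/2 * pab := by ring
        _ ≤ Fc := h7
    -- double counting over x
    have hdc := RHG.double_count (R.P a b) (Finset.Ico q₁ (q₁ + q₂))
      (fun x k => (η / 2) * (((R.P a k).card : ℝ) * ((R.P b k).card : ℝ)) ≤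
            (((R.A a b k).filter (fun e => e.1 = x)).card : ℝ))
    have hIcoCard : (Finset.Ico q₁ (q₁ + q₂)).card = q₂ := by
      rw [Nat.card_Ico]; omega
    have hsum2 : ((R.P a b).card : ℝ) * ((η / 2) * (q₂ : ℝ)) ≤
        ∑ x ∈ R.P a b, (((Finset.Ico q₁ (q₁ + q₂)).filter (fun k =>
          (η / 2) * (((R.P a k).card : ℝ) * ((R.P b k).card : ℝ)) ≤
            (((R.A a b k).filter (fun e => e.1 = x)).card : ℝ))).card : ℝ) := by
      rw [hdc]
      have hs := Finset.sum_le_sum hHvy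
      rw [Finset.sum_const, nsmul_eq_mul, hIcoCard] at hs
      calc ((R.P a b).card : ℝ) * ((η / 2) * (q₂ : ℝ))
          = (q₂ : ℝ) * ((η/2) * ((R.P a b).card : ℝ)) := by ring
        _ ≤ ∑ k ∈ Finset.Ico q₁ (q₁ + q₂), (((R.P a b).filter (fun x =>
              (η / 2) * (((R.P a k).card : ℝ) * ((R.P b k).card : ℝ)) ≤
                (((R.A a b k).filter (fun e => e.1 = x)).card : ℝ))).card : ℝ) := hs
    obtain ⟨x, hx1, hx2⟩ := RHG.exists_heavy (R.P a b) hPab _ _ hsum2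
    exact ⟨x, hx1, hx2⟩
  -- choose the red vertices
  set xsel : ℕ → ℕ → ℕ := fun a b =>
    if h : a < b ∧ b < q₁ then (redA a b h.1 h.2).choose else 0 with hxseldef
  have hxsel : ∀ a b : ℕ, a < b → b < q₁ → xsel a b ∈ R.P a b ∧
      (η / 2) * (q₂ : ℝ) ≤
        (((Finset.Ico q₁ (q₁ + q₂)).filter (fun k =>
          (η / 2) * (((R.P a k).card : ℝ) * ((R.P b k).card : ℝ)) ≤
            (((R.A a b k).filter (fun e => e.1 = xsel a b)).card : ℝ))).card : ℝ) := by
    intro a b h1 h2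
    have hx : xsel a b = (redA a b h1 h2).choose := by
      simp only [hxseldef, dif_pos (⟨h1, h2⟩ : a < b ∧ b < q₁)]
    simp only [hx]
    exact (redA a b h1 h2).choose_spec
  -- colour pairs by the set of good σ-indices
  set colr : ℕ → ℕ → Finset (Fin q₂) := fun a b =>
    Finset.univ.filter (fun t : Fin q₂ =>
      (η / 2) * (((R.P a (q₁ + (t:ℕ))).card : ℝ) * ((R.P b (q₁ + (t:ℕ))).card : ℝ)) ≤
        (((R.A a b (q₁ + (t:ℕ))).filter (fun e => e.1 = xsel a b)).card : ℝ)) with hcolrdef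
  obtain ⟨Λ₀, κ, hΛ₀sub, hΛ₀card, hmonoc⟩ := hq₁ colr (Finset.range q₁)
    (by rw [Finset.card_range])
  obtain ⟨Λ, hΛsub, hΛcard⟩ := Finset.exists_subset_card_eq hΛ₀card
  have hΛq₁ : ∀ i ∈ Λ, i < q₁ := fun i hi => Finset.mem_range.mp (hΛ₀sub (hΛsub hi))
  have hcolΛ : ∀ a ∈ Λ, ∀ b ∈ Λ, a < b → colr a b = κ :=
    fun a ha b hb h => hmonoc a (hΛsub ha) b (hΛsub hb) h
  set Kst : Finset ℕ := κ.image (fun t : Fin q₂ => q₁ + (t : ℕ)) with hKstdef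
  have hKstmem : ∀ k ∈ Kst, q₁ ≤ k ∧ k < q₁ + q₂ := by
    intro k hk
    simp only [hKstdef, Finset.mem_image] at hk
    obtain ⟨t, _, rfl⟩ := hk
    refine ⟨Nat.le_add_right _ _, ?_⟩
    have := t.isLt
    omega
  have hKstheavy : ∀ a ∈ Λ, ∀ b ∈ Λ, a < b → ∀ k ∈ Kst,
      (η / 2) * (((R.P a k).card : ℝ) * ((R.P b k).card : ℝ)) ≤
        (((R.A a b k).filter (fun e => e.1 = xsel a b)).card : ℝ) := by
    intro a ha b hb hab k hk
    simp only [hKstdef, Finset.mem_image] at hk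
    obtain ⟨t, ht, rfl⟩ := hk
    rw [← hcolΛ a ha b hb hab] at ht
    simp only [hcolrdef, Finset.mem_filter] at ht
    exact ht.2
  have hKstcard : (η / 2) * (q₂ : ℝ) ≤ (Kst.card : ℝ) := by
    have h2Λ : 1 < Λ.card := by
      have h0 : 2 ≤ nB' := le_max_right _ _
      omega
    obtain ⟨a0, ha0, b0, hb0, hab0⟩ := Finset.one_lt_card.mp h2Λ
    obtain ⟨a, ha, b, hb, hab⟩ : ∃ a ∈ Λ, ∃ b ∈ Λ, a < b := by
      rcases lt_or_gt_of_ne hab0 with h | h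
      · exact ⟨a0, ha0, b0, hb0, h⟩
      · exact ⟨b0, hb0, a0, ha0, h⟩
    have hsub : ((Finset.Ico q₁ (q₁ + q₂)).filter (fun k =>
          (η / 2) * (((R.P a k).card : ℝ) * ((R.P b k).card : ℝ)) ≤
            (((R.A a b k).filter (fun e => e.1 = xsel a b)).card : ℝ))) ⊆ Kst := by
      intro k hk
      rw [Finset.mem_filter, Finset.mem_Ico] at hk
      obtain ⟨⟨hk1, hk2⟩, hk3⟩ := hk
      have htlt : k - q₁ < q₂ := by omega
      have hkeq : q₁ + ((⟨k - q₁, htlt⟩ : Fin q₂) : ℕ) = k := by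
        simp only []
        omega
      simp only [hKstdef, Finset.mem_image]
      refine ⟨⟨k - q₁, htlt⟩, ?_, hkeq⟩
      rw [← hcolΛ a ha b hb hab]
      simp only [hcolrdef, Finset.mem_filter]
      refine ⟨Finset.mem_univ _, ?_⟩
      rw [hkeq]
      exact hk3
    calc (η / 2) * (q₂ : ℝ) ≤ _ := (hxsel a b hab (hΛq₁ b hb)).2
      _ ≤ (Kst.card : ℝ) := by exact_mod_cast Finset.card_le_card hsub
  -- per-k staircases
  have stairk : ∀ k ∈ Kst, RHG.Stair (fun i => R.P i k) (fun i => R.P i k)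
      (fun i j => ((R.A i j k).filter (fun e => e.1 = xsel i j)).image
        (fun e => (e.2.1, e.2.2))) Λ h₁ := by
    intro k hk
    obtain ⟨hkq₁, hkq⟩ := hKstmem k hk
    apply hB _ _ _ Λ (by rw [hΛcard]; exact le_trans (le_max_left _ _) (le_max_left _ _))
    refine ⟨?_, ?_, ?_⟩
    · intro i hi
      exact R.P_nonempty i k (by have := hΛq₁ i hi; omega) hkq (by have := hΛq₁ i hi; omega)
    · intro i hi
      exact R.P_nonempty i k (by have := hΛq₁ i hi; omega) hkq (by have := hΛq₁ i hi; omega)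
    · intro i hi j hj hij
      have hjq₁ := hΛq₁ j hj
      have hsubA := R.A_sub i j k hij (by omega) hkq
      constructor
      · intro e' he'
        rw [Finset.mem_image] at he'
        obtain ⟨e, he, rfl⟩ := he'
        rw [Finset.mem_filter] at he
        rw [Finset.mem_product]
        exact ⟨(hsubA e he.1).2.1, (hsubA e he.1).2.2⟩
      · have himg := RHG.fiber_image_card (R.A i j k) (xsel i j)
        have hhv := hKstheavy i hi j hj hij k hk
        calc (η/2) * ((R.P i k).card : ℝ) * ((R.P j k).card : ℝ)
            = (η/2) * (((R.P i k).card : ℝ) * ((R.P j k).card : ℝ)) := by ring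
          _ ≤ (((R.A i j k).filter (fun e => e.1 = xsel i j)).card : ℝ) := hhv
          _ = ((((R.A i j k).filter (fun e => e.1 = xsel i j)).image
                (fun e => (e.2.1, e.2.2))).card : ℝ) := by exact_mod_cast himg.symm
  -- choose the staircase data
  have stairsel : ∀ k : ℕ, ∃ (f : Fin h₁ → ℕ) (bv gv : ℕ → ℕ), k ∈ Kst →
      (StrictMono f ∧ (∀ u, f u ∈ Λ) ∧ (∀ u, bv (f u) ∈ R.P (f u) k) ∧
        (∀ u, gv (f u) ∈ R.P (f u) k) ∧
        ∀ u v : Fin h₁, u < v → (bv (f u), gv (f v)) ∈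
          ((R.A (f u) (f v) k).filter (fun e => e.1 = xsel (f u) (f v))).image
            (fun e => (e.2.1, e.2.2))) := by
    intro k
    by_cases hk : k ∈ Kst
    · obtain ⟨f, hmono, hmem, bv, gv, hbv, hgv, hev⟩ := stairk k hk
      exact ⟨f, bv, gv, fun _ => ⟨hmono, hmem, hbv, hgv, hev⟩⟩
    · exact ⟨fun u => (u : ℕ), fun _ => 0, fun _ => 0, fun h => absurd h hk⟩
  choose fsel bsel gsel hsel using stairsel
  -- pigeonhole over the tuples
  set τ : ℕ → Finset ℕ := fun k => Finset.image (fsel k) Finset.univ with hτdef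
  have hmaps : ∀ k ∈ Kst, τ k ∈ Λ.powerset := by
    intro k hk
    simp only [hτdef, Finset.mem_powerset]
    intro x hx
    rw [Finset.mem_image] at hx
    obtain ⟨u, _, rfl⟩ := hx
    exact (hsel k hk).2.1 u
  have hC₀Kst : Λ.powerset.card * (h₂ - 1) < Kst.card := by
    have h1 : (C₀ : ℝ) * h₂ + 1 ≤ (Kst.card : ℝ) := le_trans hq₂big hKstcard
    have h2 : C₀ * h₂ + 1 ≤ Kst.card := by exact_mod_cast h1
    have h3 : C₀ * (h₂ - 1) ≤ C₀ * h₂ := Nat.mul_le_mul_left _ (Nat.sub_le _ _)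
    have h4 : Λ.powerset.card = C₀ := by rw [Finset.card_powerset, hΛcard]
    rw [h4]
    omega
  obtain ⟨τst, hτpow, hfib⟩ :=
    Finset.exists_lt_card_fiber_of_mul_lt_card_of_maps_to hmaps hC₀Kst
  set K' := Kst.filter (fun k => τ k = τst) with hK'def
  have hK'h₂ : h₂ ≤ K'.card := by omega
  have hK'ne : K'.Nonempty := by
    rw [← Finset.card_pos]
    omega
  obtain ⟨k₀, hk₀K'⟩ := hK'ne
  have hK'K : K' ⊆ Kst := Finset.filter_subset _ _
  have hk₀Kst : k₀ ∈ Kst := hK'K hk₀K'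
  have hτk₀ : τ k₀ = τst := by
    have := hk₀K'
    rw [hK'def, Finset.mem_filter] at this
    exact this.2
  have hτcard : τst.card = h₁ := by
    rw [← hτk₀]
    simp only [hτdef]
    rw [Finset.card_image_of_injective _ ((hsel k₀ hk₀Kst).1).injective, Finset.card_univ,
      Fintype.card_fin]
  have hτΛ : τst ⊆ Λ := Finset.mem_powerset.mp hτpow
  have hfeq : ∀ k ∈ K', fsel k = ⇑(τst.orderEmbOfFin hτcard) := by
    intro k hk
    have hτk : τ k = τst := by
      have := hk
      rw [hK'def, Finset.mem_filter] at this
      exact this.2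
    exact Finset.orderEmbOfFin_unique hτcard (fun u => by
      rw [← hτk]
      simp only [hτdef]
      exact Finset.mem_image_of_mem _ (Finset.mem_univ u)) ((hsel k (hK'K hk)).1)
  obtain ⟨K'', hK''sub, hK''card⟩ := Finset.exists_subset_card_eq hK'h₂
  refine ⟨fun r => τst.orderEmbOfFin hτcard r, fun t => K''.orderEmbOfFin hK''card t,
    (τst.orderEmbOfFin hτcard).strictMono, ?_, (K''.orderEmbOfFin hK''card).strictMono,
    ?_, ?_⟩
  · intro r
    exact hΛq₁ _ (hτΛ (Finset.orderEmbOfFin_mem τst hτcard r))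
  · intro t
    exact hKstmem _ (hK'K (hK''sub (Finset.orderEmbOfFin_mem K'' hK''card t)))
  · refine ⟨(fun a b => xsel a b), (fun a k => bsel k a), (fun a k => gsel k a), ?_, ?_, ?_⟩
    · intro r s hrs
      have hlt : τst.orderEmbOfFin hτcard r < τst.orderEmbOfFin hτcard s :=
        (τst.orderEmbOfFin hτcard).strictMono hrs
      have hsq : τst.orderEmbOfFin hτcard s < q₁ :=
        hΛq₁ _ (hτΛ (Finset.orderEmbOfFin_mem τst hτcard s))
      exact (hxsel _ _ hlt hsq).1
    · intro r t
      have hkK' : (K''.orderEmbOfFin hK''card t) ∈ K' :=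
        hK''sub (Finset.orderEmbOfFin_mem K'' hK''card t)
      have hkKst : (K''.orderEmbOfFin hK''card t) ∈ Kst := hK'K hkK'
      have hs := hsel _ hkKst
      have hfk := hfeq _ hkK'
      constructor
      · have hbm := hs.2.2.1 r
        rw [hfk] at hbm
        exact hbm
      · have hgm := hs.2.2.2.1 r
        rw [hfk] at hgm
        exact hgm
    · intro r s t hrs
      have hkK' : (K''.orderEmbOfFin hK''card t) ∈ K' :=
        hK''sub (Finset.orderEmbOfFin_mem K'' hK''card t)
      have hkKst : (K''.orderEmbOfFin hK''card t) ∈ Kst := hK'K hkK'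
      have hs := hsel _ hkKst
      have hfk := hfeq _ hkK'
      have he := hs.2.2.2.2 r s hrs
      rw [hfk] at he
      rw [Finset.mem_image] at he
      obtain ⟨e, hef, heq⟩ := he
      rw [Finset.mem_filter] at hef
      have h1 : e.2.1 = bsel (K''.orderEmbOfFin hK''card t) (τst.orderEmbOfFin hτcard r) :=
        congrArg Prod.fst heq
      have h2 : e.2.2 = gsel (K''.orderEmbOfFin hK''card t) (τst.orderEmbOfFin hτcard s) :=
        congrArg Prod.snd heq
      have h3 : (xsel (τst.orderEmbOfFin hτcard r) (τst.orderEmbOfFin hτcard s),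
          bsel (K''.orderEmbOfFin hK''card t) (τst.orderEmbOfFin hτcard r),
          gsel (K''.orderEmbOfFin hK''card t) (τst.orderEmbOfFin hτcard s)) = e :=
        Prod.ext hef.2.symm (Prod.ext h1.symm h2.symm)
      rw [h3]
      exact hef.1
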